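/- For every vector j ∈ ℝⁿ, defining the tidal currents J ∈ ℝᵐ by J_μ = ⟨c_μ, j⟩ and the cycle circuitations F ∈ ℝᵏ by F_α = ⟨c_α, j⟩, the squared Euclidean norm of j decomposes as ⟨j, j⟩ = Jᵀ (*K)⁻¹ J + Fᵀ K⁻¹ F (the linear-regime entropy production formula). -/

import Mathlib

open Matrix

/-- Standard basis vector of `ℝⁿ` labeled by a cochord index `μ : Fin m`. -/
def eCo (m k : ℕ) (μ : Fin m) : (Fin m ⊕ Fin k) → ℝ := Pi.single (Sum.inl μ) 1

/-- Standard basis vector of `ℝⁿ` labeled by a chord index `α : Fin k`. -/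
def eCh (m k : ℕ) (α : Fin k) : (Fin m ⊕ Fin k) → ℝ := Pi.single (Sum.inr α) 1

/-- The cycle Kirchhoff–Symanzik matrix `K_{α,α'} = ⟨c_α, c_{α'}⟩`. -/
def cycKS (m k : ℕ) (ccy : Fin k → (Fin m ⊕ Fin k) → ℝ) : Matrix (Fin k) (Fin k) ℝ :=
  Matrix.of fun α α' => ccy α ⬝ᵥ ccy α'

/-- The cocycle Kirchhoff–Symanzik matrix `(*K)_{μ,μ'} = ⟨c_μ, c_{μ'}⟩`. -/
def cocKS (m k : ℕ) (cco : Fin m → (Fin m ⊕ Fin k) → ℝ) : Matrix (Fin m) (Fin m) ℝ :=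
  Matrix.of fun μ μ' => cco μ ⬝ᵥ cco μ'

/-- The superposition matrix `ω_{μ,α} = ⟨c_μ, e_α⟩`. -/
def supMat (m k : ℕ) (cco : Fin m → (Fin m ⊕ Fin k) → ℝ) : Matrix (Fin m) (Fin k) ℝ :=
  Matrix.of fun μ α => cco μ ⬝ᵥ eCh m k α

/-- Linear-regime entropy production: for every `j ∈ ℝⁿ`, with tidal currents
`J_μ = ⟨c_μ, j⟩` and cycle circuitations `F_α = ⟨c_α, j⟩`, one has
`⟨j, j⟩ = Jᵀ (*K)⁻¹ J + Fᵀ K⁻¹ F`. -/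
theorem statement18 (m k : ℕ)
    (ccy : Fin k → (Fin m ⊕ Fin k) → ℝ) (cco : Fin m → (Fin m ⊕ Fin k) → ℝ)
    (hch : ∀ α α' : Fin k, eCh m k α ⬝ᵥ ccy α' = if α = α' then 1 else 0)
    (hco : ∀ μ μ' : Fin m, eCo m k μ ⬝ᵥ cco μ' = if μ = μ' then 1 else 0)
    (hcc : ∀ (α : Fin k) (μ : Fin m), ccy α ⬝ᵥ cco μ = 0)
    :
    ∀ j : (Fin m ⊕ Fin k) → ℝ,
      j ⬝ᵥ j =
        (fun μ => cco μ ⬝ᵥ j) ⬝ᵥ ((cocKS m k cco)⁻¹ *ᵥ fun μ => cco μ ⬝ᵥ j) +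
        (fun α => ccy α ⬝ᵥ j) ⬝ᵥ ((cycKS m k ccy)⁻¹ *ᵥ fun α => ccy α ⬝ᵥ j) := by
  intro j
  classical
  -- componentwise forms of the hypotheses
  have hcoe : ∀ μ μ' : Fin m, cco μ' (Sum.inl μ) = if μ = μ' then 1 else 0 := by
    intro μ μ'
    have := hco μ μ'
    simpa [eCo, dotProduct, Pi.single_apply] using this
  have hche : ∀ α α' : Fin k, ccy α' (Sum.inr α) = if α = α' then 1 else 0 := by
    intro α α'
    have := hch α α'
    simpa [eCh, dotProduct, Pi.single_apply] using this
  set ω : Matrix (Fin m) (Fin k) ℝ := supMat m k cco with hω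
  have hωe : ∀ μ α, ω μ α = cco μ (Sum.inr α) := by
    intro μ α
    simp [hω, supMat, eCh, dotProduct, Pi.single_apply]
  -- `ccy α (inl μ) = - ω μ α`
  have hcye : ∀ (α : Fin k) (μ : Fin m), ccy α (Sum.inl μ) = - ω μ α := by
    intro α μ
    have h := hcc α μ
    rw [dotProduct, Fintype.sum_sum_type] at h
    have h1 : (∑ μ' : Fin m, ccy α (Sum.inl μ') * cco μ (Sum.inl μ'))
        = ccy α (Sum.inl μ) := by
      rw [Finset.sum_eq_single μ]
      · simp [hcoe]
      · intro b _ hb; simp [hcoe, hb]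
      · simp
    have h2 : (∑ α' : Fin k, ccy α (Sum.inr α') * cco μ (Sum.inr α')) = ω μ α := by
      rw [Finset.sum_eq_single α]
      · simp [hche, hωe]
      · intro b _ hb; simp [hche, hb]
      · simp
    rw [h1, h2] at h
    linarith
  -- The two KS matrices are positive definite, hence invertible
  have hcoc : cocKS m k cco = 1 + ω * ωᴴ := by
    ext μ μ'
    simp only [cocKS, Matrix.of_apply, dotProduct, Fintype.sum_sum_type,
      Matrix.add_apply, Matrix.one_apply, Matrix.mul_apply, Matrix.conjTranspose_apply,
      star_trivial]
    have h1 : (∑ μ'' : Fin m, cco μ (Sum.inl μ'') * cco μ' (Sum.inl μ''))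
        = if μ = μ' then 1 else 0 := by
      simp [hcoe, Finset.sum_ite_eq', ite_and, eq_comm]
    rw [h1]
    simp [hωe]
  have hcyc : cycKS m k ccy = 1 + ωᴴ * ω := by
    ext α α'
    simp only [cycKS, Matrix.of_apply, dotProduct, Fintype.sum_sum_type,
      Matrix.add_apply, Matrix.one_apply, Matrix.mul_apply, Matrix.conjTranspose_apply,
      star_trivial]
    have h2 : (∑ α'' : Fin k, ccy α (Sum.inr α'') * ccy α' (Sum.inr α''))
        = if α = α' then 1 else 0 := by
      simp [hche, Finset.sum_ite_eq', ite_and, eq_comm]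
    rw [h2]
    simp only [hcye]
    ring_nf
  have hcocPD : (cocKS m k cco).PosDef := by
    rw [hcoc]
    exact Matrix.PosDef.add_posSemidef Matrix.PosDef.one
      (Matrix.posSemidef_self_mul_conjTranspose ω)
  have hcycPD : (cycKS m k ccy).PosDef := by
    rw [hcyc]
    exact Matrix.PosDef.add_posSemidef Matrix.PosDef.one
      (Matrix.posSemidef_conjTranspose_mul_self ω)
  have hcocU : IsUnit (cocKS m k cco) := hcocPD.isUnit
  have hcycU : IsUnit (cycKS m k ccy) := hcycPD.isUnit
  -- the matrix whose rows are the cocycles and cycles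
  set C : Matrix (Fin m ⊕ Fin k) (Fin m ⊕ Fin k) ℝ :=
    Matrix.of (Sum.elim cco ccy) with hC
  have hCCT : C * Cᵀ = Matrix.fromBlocks (cocKS m k cco) 0 0 (cycKS m k ccy) := by
    ext i i'
    rcases i with μ | α <;> rcases i' with μ' | α'
    · simp [hC, Matrix.mul_apply, Matrix.fromBlocks, cocKS, dotProduct]
    · have := hcc α' μ
      rw [dotProduct] at this
      simp [hC, Matrix.mul_apply, Matrix.fromBlocks]
      simpa [mul_comm] using this
    · have := hcc α μ'
      rw [dotProduct] at this
      simp [hC, Matrix.mul_apply, Matrix.fromBlocks]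
      simpa using this
    · simp [hC, Matrix.mul_apply, Matrix.fromBlocks, cycKS, dotProduct]
  set N : Matrix (Fin m ⊕ Fin k) (Fin m ⊕ Fin k) ℝ :=
    Matrix.fromBlocks (cocKS m k cco)⁻¹ 0 0 (cycKS m k ccy)⁻¹ with hN
  have hNinv : (C * Cᵀ) * N = 1 := by
    rw [hCCT, hN, Matrix.fromBlocks_multiply]
    rw [Matrix.mul_nonsing_inv _ ((Matrix.isUnit_iff_isUnit_det _).mp hcocU),
      Matrix.mul_nonsing_inv _ ((Matrix.isUnit_iff_isUnit_det _).mp hcycU)]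
    simp [Matrix.fromBlocks_one]
  -- C is invertible
  have hCU : IsUnit C := by
    have : C * (Cᵀ * N) = 1 := by rw [← Matrix.mul_assoc]; exact hNinv
    exact (Matrix.isUnit_iff_isUnit_det _).mpr (Matrix.isUnit_det_of_right_inverse this)
  have hCTU : IsUnit Cᵀ := by
    rwa [Matrix.isUnit_iff_isUnit_det, Matrix.det_transpose,
      ← Matrix.isUnit_iff_isUnit_det]
  have hNeq : N = (C * Cᵀ)⁻¹ := (Matrix.inv_eq_right_inv hNinv).symm
  -- the key identity `Cᵀ * N * C = 1`
  have hkey : Cᵀ * (N * C) = 1 := by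
    rw [hNeq, Matrix.mul_inv_rev,
      Matrix.mul_assoc (Cᵀ)⁻¹ C⁻¹ C,
      Matrix.nonsing_inv_mul _ ((Matrix.isUnit_iff_isUnit_det _).mp hCU),
      Matrix.mul_one,
      Matrix.mul_nonsing_inv _ ((Matrix.isUnit_iff_isUnit_det _).mp hCTU)]
  -- now put everything together
  have hv : C *ᵥ j = Sum.elim (fun μ => cco μ ⬝ᵥ j) (fun α => ccy α ⬝ᵥ j) := by
    ext i; rcases i with μ | α <;> simp [hC, Matrix.mulVec]
  calc j ⬝ᵥ j = (j ᵥ* (Cᵀ * (N * C))) ⬝ᵥ j := by rw [hkey]; simp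
    _ = ((j ᵥ* Cᵀ) ᵥ* (N * C)) ⬝ᵥ j := by rw [Matrix.vecMul_vecMul]
    _ = (C *ᵥ j) ⬝ᵥ ((N * C) *ᵥ j) := by
        rw [Matrix.vecMul_transpose, ← Matrix.dotProduct_mulVec]
    _ = (C *ᵥ j) ⬝ᵥ (N *ᵥ (C *ᵥ j)) := by rw [Matrix.mulVec_mulVec]
    _ = _ := by
        rw [hv, hN, Matrix.fromBlocks_mulVec]
        rw [sumElim_dotProduct_sumElim]
        simp
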